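/- Let W_1,…,W_m be random variables and suppose the signs ε_j = sign(W_j) for j in a null set H_0 are i.i.d. symmetric ±1 random variables independent of the magnitudes (|W_1|,…,|W_m|) and of (W_j)_{j∉H_0}. For q ∈ (0,1) define the knockoff+ threshold T = min{ t ∈ {|W_j| : W_j ≠ 0} : (1 + #{j : W_j ≤ −t}) / max(1, #{j : W_j ≥ t}) ≤ q } (T = +∞ if no such t). Then E[ #{j ∈ H_0 : W_j ≥ T} / max(1, #{j : W_j ≥ T}) ] ≤ q. -/

import Mathlib

open MeasureTheory ProbabilityTheory Finset


def kcnt (k : ℕ) (τ : Finset ℕ) : ℕ := (τ.filter (fun i => i < k)).card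

lemma kcnt_le (k : ℕ) (τ : Finset ℕ) : kcnt k τ ≤ k := by
  have : τ.filter (fun i => i < k) ⊆ Finset.range k := by
    intro i hi; simp only [mem_filter] at hi; exact Finset.mem_range.2 hi.2
  simpa [kcnt] using (Finset.card_le_card this).trans_eq (by simp)

lemma kcnt_zero (τ : Finset ℕ) : kcnt 0 τ = 0 := by simp [kcnt]

lemma kcnt_of_subset_range {n : ℕ} {τ : Finset ℕ} (h : τ ⊆ Finset.range n) {k : ℕ}
    (hk : n ≤ k) : kcnt k τ = τ.card := by
  unfold kcnt
  rw [Finset.filter_true_of_mem]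
  intro i hi
  exact lt_of_lt_of_le (Finset.mem_range.1 (h hi)) hk

lemma kcnt_insert_of_ge {n k : ℕ} (τ : Finset ℕ) (hk : k ≤ n) :
    kcnt k (insert n τ) = kcnt k τ := by
  unfold kcnt
  rw [Finset.filter_insert, if_neg (by omega)]

noncomputable def kval (k : ℕ) (τ : Finset ℕ) : ℝ :=
  (kcnt k τ : ℝ) / ((k : ℝ) + 1 - kcnt k τ)

lemma kval_denom_pos (k : ℕ) (τ : Finset ℕ) : (0:ℝ) < (k : ℝ) + 1 - kcnt k τ := by
  have h1 : (kcnt k τ : ℝ) ≤ k := by exact_mod_cast kcnt_le k τ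
  linarith

lemma kval_nonneg (k : ℕ) (τ : Finset ℕ) : 0 ≤ kval k τ := by
  unfold kval
  have := kval_denom_pos k τ
  positivity

lemma kval_zero (τ : Finset ℕ) : kval 0 τ = 0 := by simp [kval, kcnt_zero]

lemma kval_empty (k : ℕ) : kval k ∅ = 0 := by simp [kval, kcnt]

theorem stopSum : ∀ (n : ℕ) (K : Finset ℕ → ℕ),
    (∀ τ ∈ (Finset.range n).powerset, K τ ≤ n) →
    (∀ τ₁ ∈ (Finset.range n).powerset, ∀ τ₂ ∈ (Finset.range n).powerset, ∀ k,
      kcnt k τ₁ = kcnt k τ₂ → τ₁.filter (fun i => k ≤ i) = τ₂.filter (fun i => k ≤ i) →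
      (k ≤ K τ₁ ↔ k ≤ K τ₂)) →
    ∑ τ ∈ (Finset.range n).powerset, kval (K τ) τ ≤ 2 ^ n - 1 := by
  intro n
  induction n with
  | zero =>
    intro K hK1 hK2
    simp [kval_empty]
  | succ n IH =>
    intro K hK1 hK2
    have hns : n ∉ Finset.range n := Finset.notMem_range_self
    -- Step A : pointwise decomposition
    have stepA : ∑ τ ∈ (Finset.range (n+1)).powerset, kval (K τ) τ =
        (∑ τ ∈ (Finset.range (n+1)).powerset, kval (min (K τ) n) τ) +
        ∑ τ ∈ (Finset.range (n+1)).powerset,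
          (if n+1 ≤ K τ then kval (n+1) τ - kval n τ else 0) := by
      rw [← Finset.sum_add_distrib]
      apply Finset.sum_congr rfl
      intro τ hτ
      by_cases h : K τ ≤ n
      · rw [min_eq_left h, if_neg (by omega)]; ring
      · have hKt : K τ = n + 1 := le_antisymm (hK1 τ hτ) (by omega)
        rw [min_eq_right (by omega), if_pos (by omega), hKt]; ring
    rw [stepA]
    -- Step B : first sum via IH
    have hB : (∑ τ ∈ (Finset.range (n+1)).powerset, kval (min (K τ) n) τ) ≤
        (2 ^ n - 1) + (2 ^ n - 1) := by
      rw [Finset.range_add_one, Finset.sum_powerset_insert hns]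
      have e2 : ∀ τ ∈ (Finset.range n).powerset,
          kval (min (K (insert n τ)) n) (insert n τ) =
          kval (min (K (insert n τ)) n) τ := by
        intro τ hτ
        unfold kval
        rw [kcnt_insert_of_ge τ (min_le_right _ _)]
      rw [Finset.sum_congr rfl e2]
      gcongr ?_ + ?_
      · apply IH (fun τ => min (K τ) n)
        · intro τ hτ; exact min_le_right _ _
        · intro τ₁ h₁ τ₂ h₂ k hc hf
          by_cases hk : k ≤ n
          · have h₁' : τ₁ ∈ (Finset.range (n+1)).powerset := by
              simp only [Finset.mem_powerset] at h₁ ⊢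
              exact h₁.trans (Finset.range_subset_range.2 (by omega))
            have h₂' : τ₂ ∈ (Finset.range (n+1)).powerset := by
              simp only [Finset.mem_powerset] at h₂ ⊢
              exact h₂.trans (Finset.range_subset_range.2 (by omega))
            simp only [le_min_iff]
            have := hK2 τ₁ h₁' τ₂ h₂' k hc hf
            tauto
          · constructor <;> intro h <;> exact absurd (h.trans (min_le_right _ _)) hk
      · apply IH (fun τ => min (K (insert n τ)) n)
        · intro τ hτ; exact min_le_right _ _
        · intro τ₁ h₁ τ₂ h₂ k hc hf
          by_cases hk : k ≤ n
          · have h₁' : insert n τ₁ ∈ (Finset.range (n+1)).powerset := by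
              simp only [Finset.mem_powerset] at h₁ ⊢
              rw [Finset.range_add_one]; exact Finset.insert_subset_insert _ h₁
            have h₂' : insert n τ₂ ∈ (Finset.range (n+1)).powerset := by
              simp only [Finset.mem_powerset] at h₂ ⊢
              rw [Finset.range_add_one]; exact Finset.insert_subset_insert _ h₂
            have hc' : kcnt k (insert n τ₁) = kcnt k (insert n τ₂) := by
              rw [kcnt_insert_of_ge _ hk, kcnt_insert_of_ge _ hk, hc]
            have hf' : (insert n τ₁).filter (fun i => k ≤ i) =
                (insert n τ₂).filter (fun i => k ≤ i) := by
              rw [Finset.filter_insert, Finset.filter_insert, if_pos hk, if_pos hk, hf]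
            simp only [le_min_iff]
            have := hK2 _ h₁' _ h₂' k hc' hf'
            tauto
          · constructor <;> intro h <;> exact absurd (h.trans (min_le_right _ _)) hk
    -- Step C : second sum ≤ 1
    have hC : (∑ τ ∈ (Finset.range (n+1)).powerset,
        (if n+1 ≤ K τ then kval (n+1) τ - kval n τ else 0)) ≤ 1 := by
      have hns : n ∉ Finset.range n := Finset.notMem_range_self
      -- replace the condition by one depending only on the cardinality
      have step1 : ∀ τ ∈ (Finset.range (n+1)).powerset,
          (if n+1 ≤ K τ then kval (n+1) τ - kval n τ else 0) =
          (if n+1 ≤ K (Finset.range τ.card) then kval (n+1) τ - kval n τ else 0) := by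
        intro τ hτ
        have hτ' : τ ⊆ Finset.range (n+1) := Finset.mem_powerset.1 hτ
        have hcard : τ.card ≤ n + 1 := by
          simpa using Finset.card_le_card hτ'
        have hmem : Finset.range τ.card ∈ (Finset.range (n+1)).powerset :=
          Finset.mem_powerset.2 (Finset.range_subset_range.2 hcard)
        have hc : kcnt (n+1) τ = kcnt (n+1) (Finset.range τ.card) := by
          rw [kcnt_of_subset_range hτ' le_rfl,
            kcnt_of_subset_range (Finset.Subset.refl _) hcard, Finset.card_range]
        have hf : τ.filter (fun i => n+1 ≤ i) =
            (Finset.range τ.card).filter (fun i => n+1 ≤ i) := by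
          rw [Finset.filter_false_of_mem, Finset.filter_false_of_mem]
          · intro i hi
            have := Finset.mem_range.1 ((Finset.range_subset_range.2 hcard) hi)
            omega
          · intro i hi
            have := Finset.mem_range.1 (hτ' hi)
            omega
        have := hK2 τ hτ _ hmem (n+1) hc hf
        by_cases h : n+1 ≤ K τ
        · rw [if_pos h, if_pos (this.1 h)]
        · rw [if_neg h, if_neg (fun hh => h (this.2 hh))]
      rw [Finset.sum_congr rfl step1, Finset.sum_powerset]
      have hcardrange : (Finset.range (n+1)).card = n + 1 := Finset.card_range _
      rw [hcardrange]
      -- per-cardinality bound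
      have key : ∀ j ∈ Finset.range (n+2),
          (∑ τ ∈ Finset.powersetCard j (Finset.range (n+1)),
            (if n+1 ≤ K (Finset.range τ.card) then kval (n+1) τ - kval n τ else 0)) ≤
          (if j = n+1 then 1 else 0) := by
        intro j hj
        have hj' : j ≤ n + 1 := by simpa [Nat.lt_succ_iff] using Finset.mem_range.1 hj
        have hcongr : ∀ τ ∈ Finset.powersetCard j (Finset.range (n+1)),
            (if n+1 ≤ K (Finset.range τ.card) then kval (n+1) τ - kval n τ else 0) =
            (if n+1 ≤ K (Finset.range j) then kval (n+1) τ - kval n τ else 0) := by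
          intro τ hτ
          rw [(Finset.mem_powersetCard.1 hτ).2]
        rw [Finset.sum_congr rfl hcongr]
        by_cases hP : n+1 ≤ K (Finset.range j)
        · simp only [if_pos hP]
          by_cases hjn : j = n+1
          · subst hjn
            rw [if_pos rfl]
            have : Finset.powersetCard (n+1) (Finset.range (n+1)) = {Finset.range (n+1)} := by
              have h := Finset.powersetCard_self (Finset.range (n+1))
              rwa [hcardrange] at h
            rw [this, Finset.sum_singleton]
            have h1 : kcnt (n+1) (Finset.range (n+1)) = n+1 := by
              rw [kcnt_of_subset_range (Finset.Subset.refl _) le_rfl, Finset.card_range]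
            have h2 : kcnt n (Finset.range (n+1)) = n := by
              unfold kcnt
              have : (Finset.range (n+1)).filter (fun i => i < n) = Finset.range n := by
                ext i; simp [Finset.mem_range]; omega
              rw [this, Finset.card_range]
            unfold kval
            rw [h1, h2]
            push_cast
            have e1 : ((n:ℝ)+1) + 1 - ((n:ℝ)+1) = 1 := by ring
            have e2 : (n:ℝ) + 1 - (n:ℝ) = 1 := by ring
            rw [e1, e2]
            simp
          · -- j ≤ n : the sum is zero
            rw [if_neg hjn]
            have hjn' : j ≤ n := by omega
            rcases Nat.eq_zero_or_pos j with hj0 | hjpos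
            · subst hj0
              simp [kval_empty]
            · obtain ⟨t, rfl⟩ : ∃ t, j = t + 1 := ⟨j - 1, by omega⟩
              have htn : t + 1 ≤ n := hjn'
              rw [Finset.range_add_one, Finset.powersetCard_succ_insert hns]
              have hdisj : Disjoint (Finset.powersetCard (t+1) (Finset.range n))
                  ((Finset.powersetCard t (Finset.range n)).image (insert n)) := by
                rw [Finset.disjoint_left]
                intro x hx hx'
                obtain ⟨τ₀, hτ₀, rfl⟩ := Finset.mem_image.1 hx'
                have : insert n τ₀ ⊆ Finset.range n := (Finset.mem_powersetCard.1 hx).1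
                exact hns (this (Finset.mem_insert_self _ _))
              have hinj : ∀ a ∈ Finset.powersetCard t (Finset.range n),
                  ∀ b ∈ Finset.powersetCard t (Finset.range n),
                  insert n a = insert n b → a = b := by
                intro a ha b hb hab
                have hna : n ∉ a := fun h => hns ((Finset.mem_powersetCard.1 ha).1 h)
                have hnb : n ∉ b := fun h => hns ((Finset.mem_powersetCard.1 hb).1 h)
                have : (insert n a).erase n = (insert n b).erase n := by rw [hab]
                rwa [Finset.erase_insert hna, Finset.erase_insert hnb] at this
              rw [Finset.sum_union hdisj, Finset.sum_image hinj]
              -- values on each part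
              have v1 : ∀ τ ∈ Finset.powersetCard (t+1) (Finset.range n),
                  kval (n+1) τ - kval n τ =
                  ((t:ℝ)+1)/((n:ℝ)+2-((t:ℝ)+1)) - ((t:ℝ)+1)/((n:ℝ)+1-((t:ℝ)+1)) := by
                intro τ hτ
                obtain ⟨hsub, hcard⟩ := Finset.mem_powersetCard.1 hτ
                have c1 : kcnt (n+1) τ = t+1 := by
                  rw [kcnt_of_subset_range hsub (by omega), hcard]
                have c2 : kcnt n τ = t+1 := by
                  rw [kcnt_of_subset_range hsub le_rfl, hcard]
                unfold kval
                rw [c1, c2]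
                push_cast
                ring_nf
              have v2 : ∀ τ₀ ∈ Finset.powersetCard t (Finset.range n),
                  kval (n+1) (insert n τ₀) - kval n (insert n τ₀) =
                  ((t:ℝ)+1)/((n:ℝ)+2-((t:ℝ)+1)) - (t:ℝ)/((n:ℝ)+1-(t:ℝ)) := by
                intro τ₀ hτ₀
                obtain ⟨hsub, hcard⟩ := Finset.mem_powersetCard.1 hτ₀
                have hnτ : n ∉ τ₀ := fun h => hns (hsub h)
                have hsub' : insert n τ₀ ⊆ Finset.range (n+1) := by
                  rw [Finset.range_add_one]
                  exact Finset.insert_subset_insert _ (hsub.trans (Finset.range_subset_range.2 (by omega)))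
                have c1 : kcnt (n+1) (insert n τ₀) = t+1 := by
                  rw [kcnt_of_subset_range hsub' le_rfl, Finset.card_insert_of_notMem hnτ, hcard]
                have c2 : kcnt n (insert n τ₀) = t := by
                  rw [kcnt_insert_of_ge _ le_rfl, kcnt_of_subset_range hsub le_rfl, hcard]
                unfold kval
                rw [c1, c2]
                push_cast
                ring_nf
              rw [Finset.sum_congr rfl v1, Finset.sum_congr rfl v2,
                Finset.sum_const, Finset.sum_const, Finset.card_powersetCard,
                Finset.card_powersetCard, Finset.card_range]
              -- binomial identity
              have hbin : (n.choose (t+1)) * (t+1) = (n.choose t) * (n - t) :=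
                Nat.choose_succ_right_eq n t
              have hbinR : ((n.choose (t+1)):ℝ) * ((t:ℝ)+1) =
                  ((n.choose t):ℝ) * ((n:ℝ) - (t:ℝ)) := by
                have : ((n - t : ℕ) : ℝ) = (n:ℝ) - (t:ℝ) := by
                  have : t ≤ n := by omega
                  push_cast [this]
                  ring
                calc ((n.choose (t+1)):ℝ) * ((t:ℝ)+1)
                    = (((n.choose (t+1)) * (t+1) : ℕ) : ℝ) := by push_cast; ring
                  _ = (((n.choose t) * (n - t) : ℕ) : ℝ) := by rw [hbin]
                  _ = ((n.choose t):ℝ) * ((n:ℝ) - (t:ℝ)) := by push_cast [show t ≤ n by omega]; ring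
              have hd1 : (0:ℝ) < (n:ℝ) + 1 - ((t:ℝ)+1) := by
                have : (t:ℝ) < (n:ℝ) := by exact_mod_cast (by omega : t < n)
                linarith
              have hd2 : (0:ℝ) < (n:ℝ) + 2 - ((t:ℝ)+1) := by linarith
              rw [nsmul_eq_mul, nsmul_eq_mul]
              have expand : ((n.choose (t+1)):ℝ) *
                  (((t:ℝ)+1)/((n:ℝ)+2-((t:ℝ)+1)) - ((t:ℝ)+1)/((n:ℝ)+1-((t:ℝ)+1))) +
                  ((n.choose t):ℝ) *
                  (((t:ℝ)+1)/((n:ℝ)+2-((t:ℝ)+1)) - (t:ℝ)/((n:ℝ)+1-(t:ℝ))) = 0 := by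
                have hne1 : ((n:ℝ)+1-((t:ℝ)+1)) ≠ 0 := ne_of_gt hd1
                have hne2 : ((n:ℝ)+2-((t:ℝ)+1)) ≠ 0 := ne_of_gt hd2
                have hne3 : ((n:ℝ)+1-(t:ℝ)) ≠ 0 := by
                  intro h; apply hne2; linarith
                have e2 : ((n:ℝ)+2-((t:ℝ)+1)) = (n:ℝ)+1-(t:ℝ) := by ring
                have e1 : ((n:ℝ)+1-((t:ℝ)+1)) = (n:ℝ)-(t:ℝ) := by ring
                rw [e1, e2]
                have hne1' : ((n:ℝ)-(t:ℝ)) ≠ 0 := by rw [← e1]; exact hne1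
                field_simp
                linear_combination (-1:ℝ) * hbinR
              linarith [expand]
        · simp only [if_neg hP]
          rw [Finset.sum_const_zero]
          split_ifs <;> norm_num
      have final := Finset.sum_le_sum key
      refine le_trans (by exact final) ?_
      rw [Finset.sum_ite_eq' (Finset.range (n+2)) (n+1) (fun _ => (1:ℝ))]
      simp
    have : (2:ℝ) ^ (n+1) - 1 = ((2 ^ n - 1) + (2 ^ n - 1)) + 1 := by ring
    rw [this]
    exact add_le_add hB hC


variable {m : ℕ}

/-- Feasible thresholds for the knockoff+ filter at level `q`:
nonzero magnitudes `t = |W_j|` with `(1 + #{j : W_j ≤ -t}) ≤ q · max(1, #{j : W_j ≥ t})`. -/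
noncomputable def knockoffPlusFeasible (q : ℝ) (W : Fin m → ℝ) : Finset ℝ :=
  (Finset.univ.image fun j => |W j|).filter fun t =>
    t ≠ 0 ∧
      (1 + ((Finset.univ.filter fun j => W j ≤ -t).card : ℝ)) ≤
        q * max 1 ((Finset.univ.filter fun j => t ≤ W j).card : ℝ)

/-- The knockoff+ selected set `Ŝ = {j : W_j ≥ T_q⁺}`, empty when no threshold is
feasible (`T_q⁺ = +∞`). -/
noncomputable def knockoffPlusSelected (q : ℝ) (W : Fin m → ℝ) : Finset (Fin m) :=
  if h : (knockoffPlusFeasible q W).Nonempty then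
    Finset.univ.filter fun j => (knockoffPlusFeasible q W).min' h ≤ W j
  else ∅



/-- the false discovery proportion functional -/
noncomputable def fdpF (q : ℝ) (H0 : Finset (Fin m)) (v : Fin m → ℝ) : ℝ :=
  ((knockoffPlusSelected q v ∩ H0).card : ℝ) /
    max 1 ((knockoffPlusSelected q v).card : ℝ)

lemma card_cast_sum {α : Type*} [Fintype α] [DecidableEq α] (s : Finset α) :
    ((s.card : ℝ)) = ∑ j : α, if j ∈ s then (1:ℝ) else 0 := by
  have : s = Finset.univ.filter (· ∈ s) := by ext x; simp
  conv_lhs => rw [this]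
  rw [Finset.card_filter]
  push_cast
  exact Finset.sum_congr rfl fun k _ => by split_ifs <;> simp

lemma mem_selected {q : ℝ} {v : Fin m → ℝ} {j : Fin m} :
    j ∈ knockoffPlusSelected q v ↔
      ∃ i, |v i| ∈ knockoffPlusFeasible q v ∧ |v i| ≤ v j := by
  unfold knockoffPlusSelected
  split_ifs with h
  · rw [Finset.mem_filter]
    simp only [Finset.mem_univ, true_and]
    constructor
    · intro hle
      have hmem := (knockoffPlusFeasible q v).min'_mem h
      have : (knockoffPlusFeasible q v).min' h ∈
          (Finset.univ.image fun j => |v j|) := Finset.mem_of_mem_filter _ hmem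
      obtain ⟨i, -, hi⟩ := Finset.mem_image.1 this
      exact ⟨i, by rw [hi]; exact hmem, by rw [hi]; exact hle⟩
    · rintro ⟨i, hf, hle⟩
      exact le_trans (Finset.min'_le _ _ hf) hle
  · simp only [Finset.notMem_empty, false_iff]
    rintro ⟨i, hf, -⟩
    exact h ⟨_, hf⟩

lemma measurable_count {p : (Fin m → ℝ) → Fin m → Prop} [∀ v k, Decidable (p v k)]
    (hp : ∀ k, MeasurableSet {v : Fin m → ℝ | p v k}) :
    Measurable fun v : Fin m → ℝ => ((Finset.univ.filter (p v)).card : ℝ) := by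
  have : (fun v : Fin m → ℝ => ((Finset.univ.filter (p v)).card : ℝ)) =
      fun v => ∑ k : Fin m, if p v k then (1:ℝ) else 0 := by
    funext v
    rw [Finset.card_filter]
    push_cast
    exact Finset.sum_congr rfl fun k _ => by split_ifs <;> simp
  rw [this]
  exact Finset.measurable_sum _ fun k _ =>
    Measurable.ite (hp k) measurable_const measurable_const

lemma measurableSet_selmem (q : ℝ) (j : Fin m) :
    MeasurableSet {v : Fin m → ℝ | j ∈ knockoffPlusSelected q v} := by
  classical
  have : {v : Fin m → ℝ | j ∈ knockoffPlusSelected q v} =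
      ⋃ i : Fin m, ({v : Fin m → ℝ | |v i| ≠ 0} ∩
        {v | (1 + ((Finset.univ.filter fun k => v k ≤ -|v i|).card : ℝ)) ≤
            q * max 1 ((Finset.univ.filter fun k => |v i| ≤ v k).card : ℝ)} ∩
        {v | |v i| ≤ v j}) := by
    ext v
    simp only [Set.mem_setOf_eq, Set.mem_iUnion, Set.mem_inter_iff, mem_selected]
    constructor
    · rintro ⟨i, hf, hle⟩
      rw [knockoffPlusFeasible, Finset.mem_filter] at hf
      exact ⟨i, ⟨hf.2.1, hf.2.2⟩, hle⟩
    · rintro ⟨i, ⟨h1, h2⟩, hle⟩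
      refine ⟨i, ?_, hle⟩
      rw [knockoffPlusFeasible, Finset.mem_filter]
      exact ⟨Finset.mem_image_of_mem _ (Finset.mem_univ i), h1, h2⟩
  rw [this]
  apply MeasurableSet.iUnion
  intro i
  have habs : Measurable fun v : Fin m → ℝ => |v i| := (measurable_pi_apply i).abs
  apply MeasurableSet.inter
  apply MeasurableSet.inter
  · exact (habs (measurableSet_singleton 0)).compl
  · have h1 : Measurable fun v : Fin m → ℝ =>
        1 + ((Finset.univ.filter fun k => v k ≤ -|v i|).card : ℝ) := by
      apply Measurable.add measurable_const
      apply measurable_count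
      intro k
      exact measurableSet_le (measurable_pi_apply k) habs.neg
    have h2 : Measurable fun v : Fin m → ℝ =>
        q * max 1 ((Finset.univ.filter fun k => |v i| ≤ v k).card : ℝ) := by
      apply Measurable.mul measurable_const
      apply Measurable.max measurable_const
      apply measurable_count
      intro k
      exact measurableSet_le habs (measurable_pi_apply k)
    exact measurableSet_le h1 h2
  · exact measurableSet_le habs (measurable_pi_apply j)

lemma measurable_fdpF (q : ℝ) (H0 : Finset (Fin m)) : Measurable (fdpF q H0) := by
  classical
  have hnum : Measurable fun v : Fin m → ℝ =>
      ((knockoffPlusSelected q v ∩ H0).card : ℝ) := by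
    have : (fun v : Fin m → ℝ => ((knockoffPlusSelected q v ∩ H0).card : ℝ)) =
        fun v => ∑ j : Fin m, if j ∈ knockoffPlusSelected q v ∧ j ∈ H0 then (1:ℝ) else 0 := by
      funext v
      rw [card_cast_sum]
      exact Finset.sum_congr rfl fun k _ => by
        simp only [Finset.mem_inter]
    rw [this]
    refine Finset.measurable_sum _ fun j _ => ?_
    refine Measurable.ite ?_ measurable_const measurable_const
    exact (measurableSet_selmem q j).inter (MeasurableSet.const _)
  have hden : Measurable fun v : Fin m → ℝ =>
      max 1 ((knockoffPlusSelected q v).card : ℝ) := by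
    apply Measurable.max measurable_const
    have : (fun v : Fin m → ℝ => ((knockoffPlusSelected q v).card : ℝ)) =
        fun v => ∑ j : Fin m, if j ∈ knockoffPlusSelected q v then (1:ℝ) else 0 := by
      funext v
      rw [card_cast_sum]
    rw [this]
    exact Finset.measurable_sum _ fun j _ =>
      Measurable.ite (measurableSet_selmem q j) measurable_const measurable_const
  exact hnum.div hden

lemma fdpF_nonneg (q : ℝ) (H0 : Finset (Fin m)) (v : Fin m → ℝ) : 0 ≤ fdpF q H0 v := by
  unfold fdpF
  positivity

lemma fdpF_le_one (q : ℝ) (H0 : Finset (Fin m)) (v : Fin m → ℝ) : fdpF q H0 v ≤ 1 := by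
  unfold fdpF
  rw [div_le_one (by positivity)]
  calc ((knockoffPlusSelected q v ∩ H0).card : ℝ)
      ≤ ((knockoffPlusSelected q v).card : ℝ) := by
        exact_mod_cast Finset.card_le_card (Finset.inter_subset_left)
    _ ≤ max 1 ((knockoffPlusSelected q v).card : ℝ) := le_max_right _ _


/-- the supermartingale functional at the stopping time -/
noncomputable def GvF (q : ℝ) (H0 : Finset (Fin m)) (v : Fin m → ℝ) : ℝ :=
  if h : (knockoffPlusFeasible q v).Nonempty then
    ((H0.filter fun j => (knockoffPlusFeasible q v).min' h ≤ v j).card : ℝ) /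
      (1 + ((H0.filter fun j => v j ≤ -((knockoffPlusFeasible q v).min' h)).card : ℝ))
  else 0

lemma feasible_pos {q : ℝ} {v : Fin m → ℝ} {t : ℝ} (h : t ∈ knockoffPlusFeasible q v) :
    0 < t := by
  simp only [knockoffPlusFeasible, Finset.mem_filter] at h
  obtain ⟨himg, hne, -⟩ := h
  obtain ⟨i, -, hi⟩ := Finset.mem_image.1 himg
  have : 0 ≤ t := hi ▸ abs_nonneg _
  exact lt_of_le_of_ne this (Ne.symm hne)

lemma feasible_spec {q : ℝ} {v : Fin m → ℝ} {t : ℝ} (h : t ∈ knockoffPlusFeasible q v) :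
    (1 + ((Finset.univ.filter fun j => v j ≤ -t).card : ℝ)) ≤
      q * max 1 ((Finset.univ.filter fun j => t ≤ v j).card : ℝ) := by
  simp only [knockoffPlusFeasible, Finset.mem_filter] at h
  exact h.2.2

lemma fdp_arith {q A B P Ng : ℝ} (hq : 0 ≤ q) (hA0 : 0 ≤ A) (hB : 0 ≤ B)
    (hBNg : B ≤ Ng) (hfeas : 1 + Ng ≤ q * max 1 P) :
    A / max 1 P ≤ q * (A / (1 + B)) := by
  have hBpos : (0:ℝ) < 1 + B := by linarith
  have hNgpos : (0:ℝ) < 1 + Ng := by linarith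
  have hmaxpos : (0:ℝ) < max 1 P := lt_of_lt_of_le one_pos (le_max_left _ _)
  calc A / max 1 P ≤ A * (q / (1 + Ng)) := by
        rw [div_eq_mul_one_div A]
        apply mul_le_mul_of_nonneg_left _ hA0
        rw [div_le_div_iff₀ hmaxpos hNgpos]
        linarith
    _ = q * (A / (1 + Ng)) := by ring
    _ ≤ q * (A / (1 + B)) := by
        apply mul_le_mul_of_nonneg_left _ hq
        apply div_le_div_of_nonneg_left hA0 hBpos
        linarith

lemma fdpF_le_GvF {q : ℝ} (hq : 0 ≤ q) (H0 : Finset (Fin m)) (v : Fin m → ℝ) :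
    fdpF q H0 v ≤ q * GvF q H0 v := by
  unfold fdpF GvF knockoffPlusSelected
  split_ifs with h
  · have hfeas := feasible_spec ((knockoffPlusFeasible q v).min'_mem h)
    have hnum : Finset.univ.filter (fun j => (knockoffPlusFeasible q v).min' h ≤ v j) ∩ H0 =
        H0.filter (fun j => (knockoffPlusFeasible q v).min' h ≤ v j) := by
      ext j
      simp only [Finset.mem_inter, Finset.mem_filter, Finset.mem_univ, true_and]
      exact and_comm
    rw [hnum]
    apply fdp_arith hq (by positivity) (by positivity) _ hfeas
    exact_mod_cast Finset.card_le_card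
      (Finset.filter_subset_filter _ (Finset.subset_univ H0))
  · simp


/-- A downward-closed finset of naturals is an initial segment. -/
lemma lowerset_eq_range (A : Finset ℕ) (hlow : ∀ i j, i ≤ j → j ∈ A → i ∈ A) :
    A = Finset.range A.card := by
  have hsub : ∀ a ∈ A, Finset.range (a+1) ⊆ A := by
    intro a ha i hi
    exact hlow i a (by simpa [Nat.lt_succ_iff] using Finset.mem_range.1 hi) ha
  apply Finset.eq_of_subset_of_card_le
  · intro a ha
    rw [Finset.mem_range]
    calc a < a + 1 := Nat.lt_succ_self a
      _ = (Finset.range (a+1)).card := (Finset.card_range _).symm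
      _ ≤ A.card := Finset.card_le_card (hsub a ha)
  · rw [Finset.card_range]

/-- Existence of an enumeration of a finset sorted in weakly decreasing order of `ρ`. -/
lemma exists_sorted_list (ρ : Fin m → ℝ) :
    ∀ (n : ℕ) (s : Finset (Fin m)), s.card = n →
    ∃ l : List (Fin m), l.Nodup ∧ l.toFinset = s ∧
      l.Pairwise (fun a b => ρ b ≤ ρ a) := by
  intro n
  induction n with
  | zero =>
    intro s hs
    rw [Finset.card_eq_zero] at hs
    exact ⟨[], by simp [hs]⟩
  | succ n IH =>
    intro s hs
    have hne : s.Nonempty := by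
      rw [← Finset.card_pos, hs]; omega
    obtain ⟨b, hb, hbmax⟩ := Finset.exists_max_image s ρ hne
    obtain ⟨l', hnd, htf, hp⟩ := IH (s.erase b) (by rw [Finset.card_erase_of_mem hb, hs]; rfl)
    refine ⟨b :: l', ?_, ?_, ?_⟩
    · rw [List.nodup_cons]
      refine ⟨?_, hnd⟩
      intro hmem
      have : b ∈ s.erase b := htf ▸ List.mem_toFinset.2 hmem
      exact (Finset.notMem_erase b s) this
    · rw [List.toFinset_cons, htf, Finset.insert_erase hb]
    · rw [List.pairwise_cons]
      refine ⟨?_, hp⟩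
      intro a ha
      have : a ∈ s.erase b := htf ▸ List.mem_toFinset.2 ha
      exact hbmax a (Finset.mem_of_mem_erase this)


section iota
variable (ρ : Fin m → ℝ) (N : Finset (Fin m)) (l : List (Fin m)) (j₀ : Fin m)

lemma iota_mem (htf : l.toFinset = N) {i : ℕ} (hi : i < l.length) :
    l.getD i j₀ ∈ N := by
  rw [List.getD_eq_get l j₀ ⟨i, hi⟩, ← htf]
  exact List.mem_toFinset.2 (List.get_mem l ⟨i, hi⟩)

lemma iota_inj (hnd : l.Nodup) {i i' : ℕ} (hi : i < l.length) (hi' : i' < l.length)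
    (h : l.getD i j₀ = l.getD i' j₀) : i = i' := by
  rw [List.getD_eq_get l j₀ ⟨i, hi⟩, List.getD_eq_get l j₀ ⟨i', hi'⟩] at h
  have := (List.Nodup.get_inj_iff hnd).1 h
  exact Fin.val_eq_of_eq this

lemma iota_surj (htf : l.toFinset = N) {j : Fin m} (hj : j ∈ N) :
    ∃ i, i < l.length ∧ l.getD i j₀ = j := by
  have : j ∈ l := List.mem_toFinset.1 (htf ▸ hj)
  obtain ⟨i, hi⟩ := List.mem_iff_get.1 this
  exact ⟨i.1, i.2, by rw [List.getD_eq_get l j₀ i]; simpa using hi⟩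

lemma iota_anti (hp : l.Pairwise (fun a b => ρ b ≤ ρ a)) {i i' : ℕ}
    (hii' : i ≤ i') (hi' : i' < l.length) :
    ρ (l.getD i' j₀) ≤ ρ (l.getD i j₀) := by
  have hi : i < l.length := lt_of_le_of_lt hii' hi'
  rw [List.getD_eq_get l j₀ ⟨i, hi⟩, List.getD_eq_get l j₀ ⟨i', hi'⟩]
  rcases eq_or_lt_of_le hii' with rfl | hlt
  · exact le_of_eq (by congr)
  · exact List.pairwise_iff_getElem.1 hp i i' hi hi' hlt

lemma topset_filter_eq (hnd : l.Nodup) (htf : l.toFinset = N)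
    (hp : l.Pairwise (fun a b => ρ b ≤ ρ a)) (t : ℝ) :
    (Finset.range l.length).filter (fun i => t ≤ ρ (l.getD i j₀)) =
      Finset.range ((N.filter fun j => t ≤ ρ j).card) := by
  set A := (Finset.range l.length).filter (fun i => t ≤ ρ (l.getD i j₀)) with hA
  have hlow : ∀ i j, i ≤ j → j ∈ A → i ∈ A := by
    intro i j hij hj
    rw [hA, Finset.mem_filter, Finset.mem_range] at hj ⊢
    refine ⟨lt_of_le_of_lt hij hj.1, le_trans hj.2 (iota_anti ρ l j₀ hp hij hj.1)⟩
  have hcard : A.card = (N.filter fun j => t ≤ ρ j).card := by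
    apply Finset.card_bij (fun i _ => l.getD i j₀)
    · intro i hi
      rw [hA, Finset.mem_filter, Finset.mem_range] at hi
      exact Finset.mem_filter.2 ⟨iota_mem N l j₀ htf hi.1, hi.2⟩
    · intro i hi i' hi' h
      rw [hA, Finset.mem_filter, Finset.mem_range] at hi hi'
      exact iota_inj l j₀ hnd hi.1 hi'.1 h
    · intro j hj
      rw [Finset.mem_filter] at hj
      obtain ⟨i, hilt, hieq⟩ := iota_surj N l j₀ htf hj.1
      refine ⟨i, ?_, hieq⟩
      rw [hA, Finset.mem_filter, Finset.mem_range]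
      exact ⟨hilt, by rw [hieq]; exact hj.2⟩
  rw [← hcard]
  exact lowerset_eq_range A hlow

lemma mem_topset_iff (hnd : l.Nodup) (htf : l.toFinset = N)
    (hp : l.Pairwise (fun a b => ρ b ≤ ρ a)) (t : ℝ) {i : ℕ} (hi : i < l.length) :
    t ≤ ρ (l.getD i j₀) ↔ i < (N.filter fun j => t ≤ ρ j).card := by
  have h1 : i ∈ (Finset.range l.length).filter (fun i => t ≤ ρ (l.getD i j₀)) ↔
      (t ≤ ρ (l.getD i j₀)) := by
    rw [Finset.mem_filter, Finset.mem_range]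
    exact ⟨fun h => h.2, fun h => ⟨hi, h⟩⟩
  rw [← h1, topset_filter_eq ρ N l j₀ hnd htf hp t, Finset.mem_range]

lemma image_filter_card (hnd : l.Nodup) (htf : l.toFinset = N)
    (hp : l.Pairwise (fun a b => ρ b ≤ ρ a)) (t : ℝ) (τ' : Finset ℕ)
    (hτ' : τ' ⊆ Finset.range l.length) :
    ((τ'.image (fun i => l.getD i j₀)).filter (fun j => t ≤ ρ j)).card =
      kcnt ((N.filter fun j => t ≤ ρ j).card) τ' := by
  have hset : (τ'.image (fun i => l.getD i j₀)).filter (fun j => t ≤ ρ j) =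
      (τ'.filter (fun i => t ≤ ρ (l.getD i j₀))).image (fun i => l.getD i j₀) := by
    ext j
    simp only [Finset.mem_filter, Finset.mem_image]
    constructor
    · rintro ⟨⟨i, hiτ, rfl⟩, ht⟩
      exact ⟨i, ⟨hiτ, ht⟩, rfl⟩
    · rintro ⟨i, ⟨hiτ, ht⟩, rfl⟩
      exact ⟨⟨i, hiτ, rfl⟩, ht⟩
  rw [hset, Finset.card_image_of_injOn, kcnt]
  · congr 1
    apply Finset.filter_congr
    intro i hiτ
    have hi : i < l.length := Finset.mem_range.1 (hτ' hiτ)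
    simp only [mem_topset_iff ρ N l j₀ hnd htf hp t hi]
  · intro a ha b hb h
    simp only [Finset.coe_filter, Set.mem_setOf_eq] at ha hb
    exact iota_inj l j₀ hnd (Finset.mem_range.1 (hτ' ha.1)) (Finset.mem_range.1 (hτ' hb.1)) h

end iota


noncomputable def veeF (w : Fin m → ℝ) (N : Finset (Fin m)) (τ : Finset (Fin m)) :
    Fin m → ℝ :=
  fun j => if j ∈ N then (if j ∈ τ then |w j| else -|w j|) else w j

lemma abs_veeF (w : Fin m → ℝ) (N τ : Finset (Fin m)) (j : Fin m) :
    |veeF w N τ j| = |w j| := by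
  unfold veeF
  split_ifs <;> simp [abs_neg, abs_abs]

lemma veeF_pos_iff {w : Fin m → ℝ} {N τ : Finset (Fin m)} (hτ : τ ⊆ N)
    (hN : ∀ j ∈ N, w j ≠ 0) {t : ℝ} (ht : 0 < t) (j : Fin m) :
    t ≤ veeF w N τ j ↔ (j ∈ τ ∧ t ≤ |w j|) ∨ (j ∉ N ∧ t ≤ w j) := by
  unfold veeF
  by_cases hjN : j ∈ N
  · rw [if_pos hjN]
    by_cases hjτ : j ∈ τ
    · rw [if_pos hjτ]
      simp [hjτ, hjN]
    · rw [if_neg hjτ]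
      have : -|w j| ≤ 0 := neg_nonpos.2 (abs_nonneg _)
      constructor
      · intro hle; linarith
      · rintro (⟨hj, -⟩ | ⟨hj, -⟩)
        · exact absurd hj hjτ
        · exact absurd hjN hj
  · rw [if_neg hjN]
    constructor
    · intro hle; exact Or.inr ⟨hjN, hle⟩
    · rintro (⟨hj, -⟩ | ⟨-, hle⟩)
      · exact absurd (hτ hj) hjN
      · exact hle

lemma veeF_neg_iff {w : Fin m → ℝ} {N τ : Finset (Fin m)} (hτ : τ ⊆ N)
    (hN : ∀ j ∈ N, w j ≠ 0) {t : ℝ} (ht : 0 < t) (j : Fin m) :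
    veeF w N τ j ≤ -t ↔ (j ∈ N ∧ j ∉ τ ∧ t ≤ |w j|) ∨ (j ∉ N ∧ w j ≤ -t) := by
  unfold veeF
  by_cases hjN : j ∈ N
  · rw [if_pos hjN]
    by_cases hjτ : j ∈ τ
    · rw [if_pos hjτ]
      have : 0 ≤ |w j| := abs_nonneg _
      constructor
      · intro hle; linarith
      · rintro (⟨-, hj, -⟩ | ⟨hj, -⟩)
        · exact absurd hjτ hj
        · exact absurd hjN hj
    · rw [if_neg hjτ]
      constructor
      · intro hle
        exact Or.inl ⟨hjN, hjτ, by linarith⟩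
      · rintro (⟨-, -, hle⟩ | ⟨hj, -⟩)
        · linarith
        · exact absurd hjN hj
  · rw [if_neg hjN]
    constructor
    · intro hle; exact Or.inr ⟨hjN, hle⟩
    · rintro (⟨hj, -⟩ | ⟨-, hle⟩)
      · exact absurd hj hjN
      · exact hle

lemma count_pos_eq {w : Fin m → ℝ} {N τ : Finset (Fin m)} (hτ : τ ⊆ N)
    (hN : ∀ j ∈ N, w j ≠ 0) {t : ℝ} (ht : 0 < t) :
    (Finset.univ.filter fun j => t ≤ veeF w N τ j).card =
      (τ.filter fun j => t ≤ |w j|).card +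
      (Finset.univ.filter fun j => j ∉ N ∧ t ≤ w j).card := by
  classical
  have hsplit : (Finset.univ.filter fun j => t ≤ veeF w N τ j) =
      (τ.filter fun j => t ≤ |w j|) ∪ (Finset.univ.filter fun j => j ∉ N ∧ t ≤ w j) := by
    ext j
    simp only [Finset.mem_filter, Finset.mem_univ, true_and, Finset.mem_union]
    rw [veeF_pos_iff hτ hN ht]
  rw [hsplit, Finset.card_union_of_disjoint]
  rw [Finset.disjoint_left]
  intro j hj hj'
  simp only [Finset.mem_filter, Finset.mem_univ, true_and] at hj hj'
  exact hj'.1 (hτ hj.1)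

lemma count_neg_eq {w : Fin m → ℝ} {N τ : Finset (Fin m)} (hτ : τ ⊆ N)
    (hN : ∀ j ∈ N, w j ≠ 0) {t : ℝ} (ht : 0 < t) :
    (Finset.univ.filter fun j => veeF w N τ j ≤ -t).card =
      ((N \ τ).filter fun j => t ≤ |w j|).card +
      (Finset.univ.filter fun j => j ∉ N ∧ w j ≤ -t).card := by
  classical
  have hsplit : (Finset.univ.filter fun j => veeF w N τ j ≤ -t) =
      ((N \ τ).filter fun j => t ≤ |w j|) ∪
      (Finset.univ.filter fun j => j ∉ N ∧ w j ≤ -t) := by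
    ext j
    simp only [Finset.mem_filter, Finset.mem_univ, true_and, Finset.mem_union,
      Finset.mem_sdiff]
    rw [veeF_neg_iff hτ hN ht]
    tauto
  rw [hsplit, Finset.card_union_of_disjoint]
  rw [Finset.disjoint_left]
  intro j hj hj'
  simp only [Finset.mem_filter, Finset.mem_univ, true_and, Finset.mem_sdiff] at hj hj'
  exact hj'.1 hj.1.1

lemma sdiff_filter_card {N τ : Finset (Fin m)} (hτ : τ ⊆ N) (p : Fin m → Prop)
    [DecidablePred p] :
    ((N \ τ).filter p).card = (N.filter p).card - (τ.filter p).card ∧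
      (τ.filter p).card ≤ (N.filter p).card := by
  have hsub : τ.filter p ⊆ N.filter p := Finset.filter_subset_filter _ hτ
  constructor
  · have : (N \ τ).filter p = N.filter p \ τ.filter p := by
      ext j
      simp only [Finset.mem_filter, Finset.mem_sdiff]
      tauto
    rw [this, Finset.card_sdiff_of_subset hsub]
  · exact Finset.card_le_card hsub

lemma feas_iff {q : ℝ} {w : Fin m → ℝ} {N : Finset (Fin m)}
    (hN : ∀ j ∈ N, w j ≠ 0) {τ₁ τ₂ : Finset (Fin m)} (h₁ : τ₁ ⊆ N) (h₂ : τ₂ ⊆ N)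
    {t : ℝ}
    (hcnt : (τ₁.filter fun j => t ≤ |w j|).card = (τ₂.filter fun j => t ≤ |w j|).card) :
    t ∈ knockoffPlusFeasible q (veeF w N τ₁) ↔
      t ∈ knockoffPlusFeasible q (veeF w N τ₂) := by
  classical
  have himg : ∀ τ : Finset (Fin m),
      (Finset.univ.image fun j => |veeF w N τ j|) =
      (Finset.univ.image fun j => |w j|) := by
    intro τ
    apply Finset.image_congr
    intro j _
    exact abs_veeF w N τ j
  have key : ∀ (τ τ' : Finset (Fin m)), τ ⊆ N → τ' ⊆ N →
      (τ.filter fun j => t ≤ |w j|).card = (τ'.filter fun j => t ≤ |w j|).card →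
      t ∈ knockoffPlusFeasible q (veeF w N τ) →
      t ∈ knockoffPlusFeasible q (veeF w N τ') := by
    intro τ τ' hτ hτ' hc hmem
    rw [knockoffPlusFeasible, Finset.mem_filter] at hmem ⊢
    obtain ⟨himem, hne, hineq⟩ := hmem
    have ht : 0 < t := by
      rw [himg τ] at himem
      obtain ⟨i, -, hi⟩ := Finset.mem_image.1 himem
      exact lt_of_le_of_ne (hi ▸ abs_nonneg _) (Ne.symm hne)
    refine ⟨by rw [himg τ'] ; rwa [himg τ] at himem, hne, ?_⟩
    have hpos : (Finset.univ.filter fun j => t ≤ veeF w N τ' j).card =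
        (Finset.univ.filter fun j => t ≤ veeF w N τ j).card := by
      rw [count_pos_eq hτ hN ht, count_pos_eq hτ' hN ht, hc]
    have hneg : (Finset.univ.filter fun j => veeF w N τ' j ≤ -t).card =
        (Finset.univ.filter fun j => veeF w N τ j ≤ -t).card := by
      rw [count_neg_eq hτ hN ht, count_neg_eq hτ' hN ht,
        (sdiff_filter_card hτ _).1, (sdiff_filter_card hτ' _).1, hc]
    rw [hpos, hneg]
    exact hineq
  constructor
  · exact key τ₁ τ₂ h₁ h₂ hcnt
  · exact key τ₂ τ₁ h₂ h₁ hcnt.symm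

lemma kcnt_congr {τ₁ τ₂ : Finset ℕ} {k K' : ℕ} (hc : kcnt k τ₁ = kcnt k τ₂)
    (hf : τ₁.filter (fun i => k ≤ i) = τ₂.filter (fun i => k ≤ i)) (hk : k ≤ K') :
    kcnt K' τ₁ = kcnt K' τ₂ := by
  have hdec : ∀ τ : Finset ℕ, kcnt K' τ =
      kcnt k τ + ((τ.filter (fun i => k ≤ i)).filter (fun i => i < K')).card := by
    intro τ
    unfold kcnt
    rw [Finset.filter_filter, ← Finset.card_union_of_disjoint]
    · congr 1
      ext i
      simp only [Finset.mem_union, Finset.mem_filter]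
      constructor
      · rintro ⟨hiτ, hilt⟩
        by_cases hik : i < k
        · exact Or.inl ⟨hiτ, hik⟩
        · exact Or.inr ⟨hiτ, by omega, hilt⟩
      · rintro (⟨hiτ, hik⟩ | ⟨hiτ, -, hilt⟩)
        · exact ⟨hiτ, by omega⟩
        · exact ⟨hiτ, hilt⟩
    · rw [Finset.disjoint_left]
      intro i hi hi'
      simp only [Finset.mem_filter] at hi hi'
      omega
  rw [hdec τ₁, hdec τ₂, hc, hf]

/-- the stopped depth associated with the knockoff threshold -/
noncomputable def KF (q : ℝ) (w : Fin m → ℝ) (N : Finset (Fin m)) (l : List (Fin m))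
    (j₀ : Fin m) (τ' : Finset ℕ) : ℕ :=
  if h : (knockoffPlusFeasible q (veeF w N (τ'.image fun i => l.getD i j₀))).Nonempty
  then (N.filter fun j =>
    (knockoffPlusFeasible q (veeF w N (τ'.image fun i => l.getD i j₀))).min' h ≤ |w j|).card
  else 0

lemma KF_le (q : ℝ) (w : Fin m → ℝ) (N : Finset (Fin m)) (l : List (Fin m))
    (j₀ : Fin m) (τ' : Finset ℕ) : KF q w N l j₀ τ' ≤ N.card := by
  unfold KF
  split_ifs
  · exact Finset.card_filter_le _ _
  · exact Nat.zero_le _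

lemma KF_ge_iff (q : ℝ) (w : Fin m → ℝ) (N : Finset (Fin m)) (l : List (Fin m))
    (j₀ : Fin m) (τ' : Finset ℕ) {k : ℕ} (hk : 1 ≤ k) :
    k ≤ KF q w N l j₀ τ' ↔
      ∃ t ∈ knockoffPlusFeasible q (veeF w N (τ'.image fun i => l.getD i j₀)),
        k ≤ (N.filter fun j => t ≤ |w j|).card := by
  unfold KF
  split_ifs with h
  · constructor
    · intro hle
      exact ⟨_, (knockoffPlusFeasible _ _).min'_mem h, hle⟩
    · rintro ⟨t, htmem, htk⟩
      refine le_trans htk (Finset.card_le_card ?_)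
      intro j hj
      rw [Finset.mem_filter] at hj ⊢
      exact ⟨hj.1, le_trans (Finset.min'_le _ _ htmem) hj.2⟩
  · constructor
    · intro hle; omega
    · rintro ⟨t, htmem, -⟩
      exact absurd ⟨t, htmem⟩ h

lemma KF_stop {q : ℝ} {w : Fin m → ℝ} {N : Finset (Fin m)} {l : List (Fin m)} {j₀ : Fin m}
    (hN : ∀ j ∈ N, w j ≠ 0) (hnd : l.Nodup) (htf : l.toFinset = N)
    (hp : l.Pairwise (fun a b => |w b| ≤ |w a|)) :
    ∀ τ₁ ∈ (Finset.range l.length).powerset, ∀ τ₂ ∈ (Finset.range l.length).powerset, ∀ k,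
      kcnt k τ₁ = kcnt k τ₂ → τ₁.filter (fun i => k ≤ i) = τ₂.filter (fun i => k ≤ i) →
      (k ≤ KF q w N l j₀ τ₁ ↔ k ≤ KF q w N l j₀ τ₂) := by
  intro τ₁ h₁ τ₂ h₂ k hc hf
  rcases Nat.eq_zero_or_pos k with rfl | hk
  · simp
  rw [KF_ge_iff q w N l j₀ τ₁ hk, KF_ge_iff q w N l j₀ τ₂ hk]
  have h₁' := Finset.mem_powerset.1 h₁
  have h₂' := Finset.mem_powerset.1 h₂
  have himgsub : ∀ τ' : Finset ℕ, τ' ⊆ Finset.range l.length →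
      (τ'.image fun i => l.getD i j₀) ⊆ N := by
    intro τ' hτ' j hj
    obtain ⟨i, hi, rfl⟩ := Finset.mem_image.1 hj
    exact iota_mem N l j₀ htf (Finset.mem_range.1 (hτ' hi))
  apply exists_congr
  intro t
  by_cases hκ : k ≤ (N.filter fun j => t ≤ |w j|).card
  · have hcnt : ((τ₁.image fun i => l.getD i j₀).filter fun j => t ≤ |w j|).card =
        ((τ₂.image fun i => l.getD i j₀).filter fun j => t ≤ |w j|).card := by
      rw [image_filter_card (fun j => |w j|) N l j₀ hnd htf hp t τ₁ h₁',
        image_filter_card (fun j => |w j|) N l j₀ hnd htf hp t τ₂ h₂']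
      exact kcnt_congr hc hf hκ
    rw [feas_iff hN (himgsub τ₁ h₁') (himgsub τ₂ h₂') hcnt]
  · constructor
    · rintro ⟨-, hle⟩; exact absurd hle hκ
    · rintro ⟨-, hle⟩; exact absurd hle hκ

lemma Gmatch {q : ℝ} {w : Fin m → ℝ} {H0 N : Finset (Fin m)} {l : List (Fin m)} {j₀ : Fin m}
    (hNsub : N ⊆ H0) (hNzero : ∀ j ∈ H0, j ∉ N → w j = 0) (hNne : ∀ j ∈ N, w j ≠ 0)
    (hnd : l.Nodup) (htf : l.toFinset = N)
    (hp : l.Pairwise (fun a b => |w b| ≤ |w a|))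
    (τ' : Finset ℕ) (hτ' : τ' ⊆ Finset.range l.length) :
    GvF q H0 (veeF w N (τ'.image fun i => l.getD i j₀)) = kval (KF q w N l j₀ τ') τ' := by
  classical
  have hτsub : (τ'.image fun i => l.getD i j₀) ⊆ N := by
    intro j hj
    obtain ⟨i, hi, rfl⟩ := Finset.mem_image.1 hj
    exact iota_mem N l j₀ htf (Finset.mem_range.1 (hτ' hi))
  set τ := τ'.image fun i => l.getD i j₀ with hτdef
  unfold GvF KF
  split_ifs with h
  · set T := (knockoffPlusFeasible q (veeF w N τ)).min' h with hTdef
    have hT0 : 0 < T := feasible_pos ((knockoffPlusFeasible q (veeF w N τ)).min'_mem h)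
    have hnumset : H0.filter (fun j => T ≤ veeF w N τ j) =
        τ.filter (fun j => T ≤ |w j|) := by
      ext j
      simp only [Finset.mem_filter]
      rw [veeF_pos_iff hτsub hNne hT0]
      constructor
      · rintro ⟨hjH0, (⟨hjτ, habs⟩ | ⟨hjN, hle⟩)⟩
        · exact ⟨hjτ, habs⟩
        · have := hNzero j hjH0 hjN
          rw [this] at hle
          linarith
      · rintro ⟨hjτ, habs⟩
        exact ⟨hNsub (hτsub hjτ), Or.inl ⟨hjτ, habs⟩⟩
    have hdenset : H0.filter (fun j => veeF w N τ j ≤ -T) =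
        (N \ τ).filter (fun j => T ≤ |w j|) := by
      ext j
      simp only [Finset.mem_filter, Finset.mem_sdiff]
      rw [veeF_neg_iff hτsub hNne hT0]
      constructor
      · rintro ⟨hjH0, (⟨hjN, hjτ, habs⟩ | ⟨hjN, hle⟩)⟩
        · exact ⟨⟨hjN, hjτ⟩, habs⟩
        · have := hNzero j hjH0 hjN
          rw [this] at hle
          linarith
      · rintro ⟨⟨hjN, hjτ⟩, habs⟩
        exact ⟨hNsub hjN, Or.inl ⟨hjN, hjτ, habs⟩⟩
    have hnumcard : (τ.filter (fun j => T ≤ |w j|)).card =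
        kcnt ((N.filter fun j => T ≤ |w j|).card) τ' :=
      image_filter_card (fun j => |w j|) N l j₀ hnd htf hp T τ' hτ'
    have hle : (τ.filter (fun j => T ≤ |w j|)).card ≤
        (N.filter fun j => T ≤ |w j|).card := (sdiff_filter_card hτsub _).2
    have hdencard : ((N \ τ).filter (fun j => T ≤ |w j|)).card =
        (N.filter fun j => T ≤ |w j|).card - (τ.filter (fun j => T ≤ |w j|)).card :=
      (sdiff_filter_card hτsub _).1
    rw [hnumset, hdenset, hnumcard, hdencard, kval, hnumcard]
    have hleℕ : kcnt ((N.filter fun j => T ≤ |w j|).card) τ' ≤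
        (N.filter fun j => T ≤ |w j|).card := hnumcard ▸ hle
    congr 1
    push_cast [Nat.cast_sub hleℕ]
    ring
  · exact (kval_zero τ').symm

lemma sumG_le {q : ℝ} (w : Fin m → ℝ) (H0 : Finset (Fin m)) :
    ∑ τ ∈ (H0.filter fun j => w j ≠ 0).powerset,
      GvF q H0 (veeF w (H0.filter fun j => w j ≠ 0) τ) ≤
    2 ^ (H0.filter fun j => w j ≠ 0).card := by
  classical
  set N := H0.filter fun j => w j ≠ 0 with hNdef
  cases isEmpty_or_nonempty (Fin m) with
  | inl hemp =>
    have hNempty : N = ∅ := Finset.eq_empty_of_isEmpty N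
    rw [hNempty]
    rw [Finset.powerset_empty, Finset.sum_singleton]
    have : ¬ (knockoffPlusFeasible q (veeF w ∅ ∅)).Nonempty := by
      rintro ⟨t, ht⟩
      have : (Finset.univ : Finset (Fin m)) = ∅ := Finset.eq_empty_of_isEmpty _
      rw [knockoffPlusFeasible, this] at ht
      simp at ht
    rw [GvF, dif_neg this]
    norm_num
  | inr hne =>
    have j₀ : Fin m := Classical.arbitrary (Fin m)
    obtain ⟨l, hnd, htf, hp⟩ := exists_sorted_list (fun j => |w j|) N.card N rfl
    have hlen : l.length = N.card := by
      have h1 := List.toFinset_card_of_nodup hnd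
      rw [htf] at h1
      omega
    have hNne : ∀ j ∈ N, w j ≠ 0 := fun j hj => (Finset.mem_filter.1 hj).2
    have hNsub : N ⊆ H0 := Finset.filter_subset _ _
    have hNzero : ∀ j ∈ H0, j ∉ N → w j = 0 := by
      intro j hj hjn
      by_contra hne'
      exact hjn (Finset.mem_filter.2 ⟨hj, hne'⟩)
    have hK1 : ∀ τ ∈ (Finset.range l.length).powerset, KF q w N l j₀ τ ≤ l.length := by
      intro τ _
      rw [hlen]
      exact KF_le q w N l j₀ τ
    have hstop := stopSum l.length (KF q w N l j₀) hK1 (KF_stop hNne hnd htf hp)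
    have htrans : ∑ τ ∈ N.powerset, GvF q H0 (veeF w N τ) =
        ∑ τ' ∈ (Finset.range l.length).powerset, kval (KF q w N l j₀ τ') τ' := by
      apply Finset.sum_nbij'
        (i := fun τ => (Finset.range l.length).filter (fun i => l.getD i j₀ ∈ τ))
        (j := fun τ' => τ'.image fun i => l.getD i j₀)
      · intro τ _
        exact Finset.mem_powerset.2 (Finset.filter_subset _ _)
      · intro τ' hτ'
        refine Finset.mem_powerset.2 ?_
        intro j hj
        obtain ⟨i, hi, rfl⟩ := Finset.mem_image.1 hj
        exact iota_mem N l j₀ htf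
          (Finset.mem_range.1 ((Finset.mem_powerset.1 hτ') hi))
      · intro τ hτ
        have hτsub := Finset.mem_powerset.1 hτ
        ext j
        simp only [Finset.mem_image, Finset.mem_filter, Finset.mem_range]
        constructor
        · rintro ⟨i, ⟨-, hmem⟩, rfl⟩
          exact hmem
        · intro hj
          obtain ⟨i, hilt, hieq⟩ := iota_surj N l j₀ htf (hτsub hj)
          exact ⟨i, ⟨hilt, hieq ▸ hj⟩, hieq⟩
      · intro τ' hτ'
        have hτ'sub := Finset.mem_powerset.1 hτ'
        ext i
        simp only [Finset.mem_filter, Finset.mem_range, Finset.mem_image]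
        constructor
        · rintro ⟨hilt, i', hi', heq⟩
          have : i' = i := iota_inj l j₀ hnd
            (Finset.mem_range.1 (hτ'sub hi')) hilt heq
          exact this ▸ hi'
        · intro hi
          exact ⟨Finset.mem_range.1 (hτ'sub hi), i, hi, rfl⟩
      · intro τ hτ
        have hτsub := Finset.mem_powerset.1 hτ
        have hfil : (((Finset.range l.length).filter
            (fun i => l.getD i j₀ ∈ τ)).image fun i => l.getD i j₀) = τ := by
          ext j
          simp only [Finset.mem_image, Finset.mem_filter, Finset.mem_range]
          constructor
          · rintro ⟨i, ⟨-, hmem⟩, rfl⟩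
            exact hmem
          · intro hj
            obtain ⟨i, hilt, hieq⟩ := iota_surj N l j₀ htf (hτsub hj)
            exact ⟨i, ⟨hilt, hieq ▸ hj⟩, hieq⟩
        rw [← Gmatch hNsub hNzero hNne hnd htf hp _ (Finset.filter_subset _ _), hfil]
    rw [htrans]
    refine le_trans hstop ?_
    rw [hlen]
    have : (0:ℝ) < 2 ^ N.card := by positivity
    linarith

lemma flip_eq_veeF {w : Fin m → ℝ} {H0 : Finset (Fin m)} {b : Finset (Fin m)}
    (hb : b ⊆ H0.filter fun j => w j ≠ 0) :
    (fun j => (if j ∈ b then (-1:ℝ) else 1) * w j) =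
      veeF w (H0.filter fun j => w j ≠ 0)
        ((H0.filter fun j => w j ≠ 0).filter fun j => (j ∈ b ↔ w j < 0)) := by
  classical
  set N := H0.filter fun j => w j ≠ 0 with hNdef
  funext j
  by_cases hjN : j ∈ N
  · have hwne : w j ≠ 0 := (Finset.mem_filter.1 hjN).2
    unfold veeF
    rw [if_pos hjN]
    by_cases hjb : j ∈ b <;> by_cases hwlt : w j < 0
    · rw [if_pos hjb, if_pos (Finset.mem_filter.2 ⟨hjN, by tauto⟩), abs_of_neg hwlt]; ring
    · have hwpos : 0 < w j := lt_of_le_of_ne (not_lt.1 hwlt) (Ne.symm hwne)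
      rw [if_pos hjb, if_neg (fun hmem => by
        have := (Finset.mem_filter.1 hmem).2
        tauto), abs_of_pos hwpos]
      ring
    · rw [if_neg hjb, if_neg (fun hmem => by
        have := (Finset.mem_filter.1 hmem).2
        tauto), abs_of_neg hwlt]
      ring
    · have hwpos : 0 < w j := lt_of_le_of_ne (not_lt.1 hwlt) (Ne.symm hwne)
      rw [if_neg hjb, if_pos (Finset.mem_filter.2 ⟨hjN, by tauto⟩), abs_of_pos hwpos]
      ring
  · have hjb : j ∉ b := fun h => hjN (hb h)
    unfold veeF
    rw [if_neg hjN, if_neg hjb]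
    ring

lemma pat_invol {w : Fin m → ℝ} {N : Finset (Fin m)} {b : Finset (Fin m)} (hb : b ⊆ N) :
    N.filter (fun j => (j ∈ N.filter (fun j' => (j' ∈ b ↔ w j' < 0)) ↔ w j < 0)) = b := by
  classical
  ext j
  simp only [Finset.mem_filter]
  by_cases hjN : j ∈ N
  · simp only [hjN, true_and]
    by_cases hw : w j < 0 <;> by_cases hjb : j ∈ b <;> tauto
  · have : j ∉ b := fun h => hjN (hb h)
    tauto

lemma pointwise_sum {q : ℝ} (hq0 : 0 ≤ q) (w : Fin m → ℝ) (H0 : Finset (Fin m)) :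
    ∑ σ ∈ H0.powerset, fdpF q H0 (fun j => (if j ∈ σ then (-1:ℝ) else 1) * w j) ≤
      q * 2 ^ H0.card := by
  classical
  set N := H0.filter fun j => w j ≠ 0 with hNdef
  have hNsub : N ⊆ H0 := Finset.filter_subset _ _
  -- step 1 : dominate by the supermartingale functional
  have step1 : ∑ σ ∈ H0.powerset, fdpF q H0 (fun j => (if j ∈ σ then (-1:ℝ) else 1) * w j) ≤
      q * ∑ σ ∈ H0.powerset, GvF q H0 (fun j => (if j ∈ σ then (-1:ℝ) else 1) * w j) := by
    rw [Finset.mul_sum]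
    exact Finset.sum_le_sum fun σ _ => fdpF_le_GvF hq0 H0 _
  refine le_trans step1 ?_
  -- step 2 : split off the coordinates with w j = 0
  have step2 : ∑ σ ∈ H0.powerset, GvF q H0 (fun j => (if j ∈ σ then (-1:ℝ) else 1) * w j) =
      ∑ p ∈ (H0 \ N).powerset ×ˢ N.powerset,
        GvF q H0 (fun j => (if j ∈ p.1 ∪ p.2 then (-1:ℝ) else 1) * w j) := by
    apply Finset.sum_nbij' (i := fun σ => (σ \ N, σ ∩ N)) (j := fun p => p.1 ∪ p.2)
    · intro σ hσ
      have hσ' := Finset.mem_powerset.1 hσ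
      rw [Finset.mem_product]
      constructor
      · exact Finset.mem_powerset.2 (Finset.sdiff_subset_sdiff hσ' (le_refl N))
      · exact Finset.mem_powerset.2 Finset.inter_subset_right
    · intro p hp
      rw [Finset.mem_product] at hp
      refine Finset.mem_powerset.2 (Finset.union_subset ?_ ?_)
      · exact (Finset.mem_powerset.1 hp.1).trans (Finset.sdiff_subset)
      · exact (Finset.mem_powerset.1 hp.2).trans hNsub
    · intro σ _
      ext j
      simp only [Finset.mem_union, Finset.mem_sdiff, Finset.mem_inter]
      tauto
    · intro p hp
      rw [Finset.mem_product] at hp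
      have h1 := Finset.mem_powerset.1 hp.1
      have h2 := Finset.mem_powerset.1 hp.2
      have e1 : (p.1 ∪ p.2) \ N = p.1 := by
        ext j
        simp only [Finset.mem_sdiff, Finset.mem_union]
        constructor
        · rintro ⟨h | h, hn⟩
          · exact h
          · exact absurd (h2 h) hn
        · intro h
          exact ⟨Or.inl h, (Finset.mem_sdiff.1 (h1 h)).2⟩
      have e2 : (p.1 ∪ p.2) ∩ N = p.2 := by
        ext j
        simp only [Finset.mem_inter, Finset.mem_union]
        constructor
        · rintro ⟨h | h, hn⟩
          · exact absurd hn (Finset.mem_sdiff.1 (h1 h)).2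
          · exact h
        · intro h
          exact ⟨Or.inr h, h2 h⟩
      rw [Prod.ext_iff]
      exact ⟨e1, e2⟩
    · intro σ _
      have : σ \ N ∪ σ ∩ N = σ := by
        ext j
        simp only [Finset.mem_union, Finset.mem_sdiff, Finset.mem_inter]
        tauto
      rw [this]
  rw [step2, Finset.sum_product]
  -- step 3 : inner sums do not depend on the first component
  have step3 : ∀ a ∈ (H0 \ N).powerset, ∀ b ∈ N.powerset,
      (fun j => (if j ∈ a ∪ b then (-1:ℝ) else 1) * w j) =
      (fun j => (if j ∈ b then (-1:ℝ) else 1) * w j) := by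
    intro a ha b hb
    funext j
    by_cases hja : j ∈ a
    · have hj0 : w j = 0 := by
        have := (Finset.mem_powerset.1 ha) hja
        have := (Finset.mem_sdiff.1 this).2
        by_contra hne
        exact this (Finset.mem_filter.2 ⟨(Finset.mem_sdiff.1 ((Finset.mem_powerset.1 ha) hja)).1, hne⟩)
      rw [hj0]
      ring
    · have : j ∈ a ∪ b ↔ j ∈ b := by
        simp only [Finset.mem_union]
        tauto
      by_cases hjb : j ∈ b
      · rw [if_pos (this.2 hjb), if_pos hjb]
      · rw [if_neg (fun h => hjb (this.1 h)), if_neg hjb]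
  have step4 : ∀ a ∈ (H0 \ N).powerset,
      (∑ b ∈ N.powerset, GvF q H0 (fun j => (if j ∈ a ∪ b then (-1:ℝ) else 1) * w j)) =
      ∑ τ ∈ N.powerset, GvF q H0 (veeF w N τ) := by
    intro a ha
    rw [Finset.sum_congr rfl (fun b hb => by rw [step3 a ha b hb])]
    -- now reindex by the involution pat
    apply Finset.sum_nbij'
      (i := fun b => N.filter fun j => (j ∈ b ↔ w j < 0))
      (j := fun τ => N.filter fun j => (j ∈ τ ↔ w j < 0))
    · intro b _
      exact Finset.mem_powerset.2 (Finset.filter_subset _ _)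
    · intro τ _
      exact Finset.mem_powerset.2 (Finset.filter_subset _ _)
    · intro b hb
      exact pat_invol (Finset.mem_powerset.1 hb)
    · intro τ hτ
      exact pat_invol (Finset.mem_powerset.1 hτ)
    · intro b hb
      rw [flip_eq_veeF (Finset.mem_powerset.1 hb)]
  rw [Finset.sum_congr rfl step4, Finset.sum_const, Finset.card_powerset]
  have hsum := sumG_le (q := q) w H0
  rw [nsmul_eq_mul]
  have hcards : (H0 \ N).card + N.card = H0.card := Finset.card_sdiff_add_card_eq_card hNsub
  apply mul_le_mul_of_nonneg_left _ hq0
  calc ((2 ^ (H0 \ N).card : ℕ) : ℝ) * ∑ τ ∈ N.powerset, GvF q H0 (veeF w N τ)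
      ≤ ((2 ^ (H0 \ N).card : ℕ) : ℝ) * 2 ^ N.card := by
        apply mul_le_mul_of_nonneg_left _ (by positivity)
        exact_mod_cast hsum
    _ = 2 ^ H0.card := by
        push_cast
        rw [← pow_add, hcards]

/-- FDR control for the knockoff+ filter: if the null signs of the `W`-statistics
are i.i.d. symmetric, i.e. flipping the signs of any subset of null coordinates
leaves the joint law invariant, then the expected false discovery proportion of
the knockoff+ selection is at most `q`. -/
theorem knockoffPlus_fdr_control {Ω : Type*} [MeasurableSpace Ω]
    (μ : Measure Ω) [IsProbabilityMeasure μ]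
    (W : Ω → Fin m → ℝ) (hW : Measurable W) (H0 : Finset (Fin m))
    (hsign : ∀ ε : Fin m → ℝ, (∀ j, ε j = 1 ∨ ε j = -1) →
      (∀ j ∉ H0, ε j = 1) →
      μ.map (fun ω => fun j => ε j * W ω j) = μ.map W)
    (q : ℝ) (hq0 : 0 < q) (hq1 : q < 1) :
    ∫ ω, ((knockoffPlusSelected q (W ω) ∩ H0).card : ℝ) /
        max 1 ((knockoffPlusSelected q (W ω)).card : ℝ) ∂μ ≤ q := by
  classical
  have hFmeas : Measurable (fdpF q H0) := measurable_fdpF q H0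
  show ∫ ω, fdpF q H0 (W ω) ∂μ ≤ q
  -- each flipped version is measurable and integrable
  have hflipmeas : ∀ σ : Finset (Fin m),
      Measurable fun ω => fdpF q H0 (fun j => (if j ∈ σ then (-1:ℝ) else 1) * W ω j) := by
    intro σ
    apply hFmeas.comp
    apply measurable_pi_lambda
    intro j
    exact measurable_const.mul ((measurable_pi_apply j).comp hW)
  have hflipint : ∀ σ : Finset (Fin m),
      Integrable (fun ω => fdpF q H0 (fun j => (if j ∈ σ then (-1:ℝ) else 1) * W ω j)) μ := by
    intro σ
    apply Integrable.mono' (integrable_const (1:ℝ)) (hflipmeas σ).aestronglyMeasurable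
    apply Filter.Eventually.of_forall
    intro ω
    rw [Real.norm_eq_abs, abs_of_nonneg (fdpF_nonneg _ _ _)]
    exact fdpF_le_one _ _ _
  -- sign-flip invariance of the integral
  have hint : ∀ σ ∈ H0.powerset,
      ∫ ω, fdpF q H0 (W ω) ∂μ =
      ∫ ω, fdpF q H0 (fun j => (if j ∈ σ then (-1:ℝ) else 1) * W ω j) ∂μ := by
    intro σ hσ
    set ε : Fin m → ℝ := fun j => if j ∈ σ then (-1:ℝ) else 1 with hε
    have hεpm : ∀ j, ε j = 1 ∨ ε j = -1 := by
      intro j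
      by_cases h : j ∈ σ <;> simp [hε, h]
    have hεnull : ∀ j ∉ H0, ε j = 1 := by
      intro j hj
      have : j ∉ σ := fun h => hj ((Finset.mem_powerset.1 hσ) h)
      simp [hε, this]
    have hmap := hsign ε hεpm hεnull
    have hWmeas' : Measurable fun ω => (fun j => ε j * W ω j) := by
      apply measurable_pi_lambda
      intro j
      exact measurable_const.mul ((measurable_pi_apply j).comp hW)
    calc ∫ ω, fdpF q H0 (W ω) ∂μ
        = ∫ v, fdpF q H0 v ∂(μ.map W) :=
          (MeasureTheory.integral_map hW.aemeasurable hFmeas.aestronglyMeasurable).symm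
      _ = ∫ v, fdpF q H0 v ∂(μ.map (fun ω => fun j => ε j * W ω j)) := by rw [hmap]
      _ = ∫ ω, fdpF q H0 (fun j => ε j * W ω j) ∂μ :=
          MeasureTheory.integral_map hWmeas'.aemeasurable hFmeas.aestronglyMeasurable
  -- main bound
  have key : ((2:ℝ) ^ H0.card) * ∫ ω, fdpF q H0 (W ω) ∂μ ≤ q * 2 ^ H0.card := by
    have e1 : ((2:ℝ) ^ H0.card) * ∫ ω, fdpF q H0 (W ω) ∂μ =
        ∑ σ ∈ H0.powerset,
          ∫ ω, fdpF q H0 (fun j => (if j ∈ σ then (-1:ℝ) else 1) * W ω j) ∂μ := by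
      rw [← Finset.sum_congr rfl hint, Finset.sum_const, Finset.card_powerset,
        nsmul_eq_mul]
      push_cast
      ring
    rw [e1, ← MeasureTheory.integral_finset_sum _ (fun σ _ => hflipint σ)]
    calc ∫ ω, ∑ σ ∈ H0.powerset,
          fdpF q H0 (fun j => (if j ∈ σ then (-1:ℝ) else 1) * W ω j) ∂μ
        ≤ ∫ _, q * 2 ^ H0.card ∂μ := by
          apply MeasureTheory.integral_mono
            (MeasureTheory.integrable_finset_sum _ (fun σ _ => hflipint σ))
            (integrable_const _)
          intro ω
          exact pointwise_sum hq0.le (W ω) H0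
      _ = q * 2 ^ H0.card := by
          simp
  have h2 : (0:ℝ) < 2 ^ H0.card := by positivity
  calc ∫ ω, fdpF q H0 (W ω) ∂μ
      = (((2:ℝ) ^ H0.card) * ∫ ω, fdpF q H0 (W ω) ∂μ) / 2 ^ H0.card := by
        field_simp
    _ ≤ (q * 2 ^ H0.card) / 2 ^ H0.card := by
        exact div_le_div_of_nonneg_right key h2.le
    _ = q := by field_simp
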